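/- Let y = (y₁, y₂) with y₂ > 0 and y* = (y₁, -y₂). For every x in the closed upper half-plane with x ≠ y and x ≠ y*, the function x ↦ ∫₀^∞ e^{-as} (x₂ + s + y₂)/|x + s e₂ - y*|² ds is harmonic in the open upper half-plane (away from y). -/

import Mathlib

open MeasureTheory

/-- The Laplacian of a function on `ℝ²` (represented as `ℝ × ℝ`), computed as the sum of
the two pure second partial derivatives. -/
noncomputable def lap (f : ℝ × ℝ → ℝ) (p : ℝ × ℝ) : ℝ :=
  deriv (deriv (fun s => f (s, p.2))) p.1 + deriv (deriv (fun s => f (p.1, s))) p.2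

section aux

lemma div_bound_aux {N D E c : ℝ} (hD : 0 < D) (hc : 0 < c) (h : |N| * c ≤ E * D) :
    |N / D| ≤ 1 / c * E := by
  rw [abs_div, abs_of_pos hD, div_le_iff₀ hD, show 1 / c * E * D = E * D / c by ring,
    le_div_iff₀ hc]
  exact h

lemma bound_k {E u v c : ℝ} (hE : 0 < E) (hc : 0 < c) (hcv : c ≤ v) :
    |E * v / (u ^ 2 + v ^ 2)| ≤ 1 / c * E := by
  have hv : 0 < v := hc.trans_le hcv
  have hD : (0:ℝ) < u ^ 2 + v ^ 2 := by positivity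
  refine div_bound_aux hD hc ?_
  rw [abs_of_pos (by positivity : (0:ℝ) < E * v)]
  nlinarith [sq_nonneg u, mul_pos hE hv]

lemma bound_k1 {E u v c : ℝ} (hE : 0 < E) (hc : 0 < c) (hcv : c ≤ v) :
    |E * v * (-2) * u / ((u ^ 2 + v ^ 2) ^ 2)| ≤ 1 / c ^ 2 * E := by
  have hv : 0 < v := hc.trans_le hcv
  have hD : (0:ℝ) < (u ^ 2 + v ^ 2) ^ 2 := by positivity
  refine div_bound_aux hD (by positivity) ?_
  have habs : |E * v * (-2) * u| ≤ E * (u ^ 2 + v ^ 2) := by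
    rw [abs_le]
    constructor <;>
      nlinarith [mul_nonneg hE.le (sq_nonneg (u + v)), mul_nonneg hE.le (sq_nonneg (u - v))]
  have h2 : c ^ 2 ≤ u ^ 2 + v ^ 2 := by nlinarith
  calc |E * v * (-2) * u| * c ^ 2 ≤ (E * (u ^ 2 + v ^ 2)) * c ^ 2 :=
        mul_le_mul_of_nonneg_right habs (by positivity)
    _ ≤ (E * (u ^ 2 + v ^ 2)) * (u ^ 2 + v ^ 2) :=
        mul_le_mul_of_nonneg_left h2 (by positivity)
    _ = E * (u ^ 2 + v ^ 2) ^ 2 := by ring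

lemma bound_k2 {E u v c : ℝ} (hE : 0 < E) (hc : 0 < c) (hcv : c ≤ v) :
    |E * (u ^ 2 - v ^ 2) / ((u ^ 2 + v ^ 2) ^ 2)| ≤ 1 / c ^ 2 * E := by
  have hv : 0 < v := hc.trans_le hcv
  have hD : (0:ℝ) < (u ^ 2 + v ^ 2) ^ 2 := by positivity
  refine div_bound_aux hD (by positivity) ?_
  have habs : |E * (u ^ 2 - v ^ 2)| ≤ E * (u ^ 2 + v ^ 2) := by
    rw [abs_le]
    constructor <;>
      nlinarith [mul_nonneg hE.le (sq_nonneg u), mul_nonneg hE.le (sq_nonneg v)]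
  have h2 : c ^ 2 ≤ u ^ 2 + v ^ 2 := by nlinarith
  calc |E * (u ^ 2 - v ^ 2)| * c ^ 2 ≤ (E * (u ^ 2 + v ^ 2)) * c ^ 2 :=
        mul_le_mul_of_nonneg_right habs (by positivity)
    _ ≤ (E * (u ^ 2 + v ^ 2)) * (u ^ 2 + v ^ 2) :=
        mul_le_mul_of_nonneg_left h2 (by positivity)
    _ = E * (u ^ 2 + v ^ 2) ^ 2 := by ring

lemma bound_aux3 {N E u v c : ℝ} (hE : 0 < E) (hc : 0 < c) (hcv : c ≤ v)
    (habs : |N| ≤ 6 * E * v * (u ^ 2 + v ^ 2)) :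
    |N / ((u ^ 2 + v ^ 2) ^ 3)| ≤ 6 / c ^ 3 * E := by
  have hv : 0 < v := hc.trans_le hcv
  have hD : (0:ℝ) < (u ^ 2 + v ^ 2) ^ 3 := by positivity
  have key : |N| * c ^ 3 ≤ (6 * E) * (u ^ 2 + v ^ 2) ^ 3 := by
    have hvc : v * c ^ 3 ≤ (u ^ 2 + v ^ 2) ^ 2 := by
      have h3 : c ^ 3 ≤ v ^ 3 := pow_le_pow_left₀ hc.le hcv 3
      nlinarith [mul_le_mul_of_nonneg_left h3 hv.le, sq_nonneg (u ^ 2),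
        mul_nonneg (sq_nonneg u) (sq_nonneg v)]
    calc |N| * c ^ 3 ≤ (6 * E * v * (u ^ 2 + v ^ 2)) * c ^ 3 :=
          mul_le_mul_of_nonneg_right habs (by positivity)
      _ = (6 * E * (u ^ 2 + v ^ 2)) * (v * c ^ 3) := by ring
      _ ≤ (6 * E * (u ^ 2 + v ^ 2)) * ((u ^ 2 + v ^ 2) ^ 2) :=
          mul_le_mul_of_nonneg_left hvc (by positivity)
      _ = (6 * E) * (u ^ 2 + v ^ 2) ^ 3 := by ring
  have := div_bound_aux hD (by positivity : (0:ℝ) < c ^ 3) key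
  calc |N / ((u ^ 2 + v ^ 2) ^ 3)| ≤ 1 / c ^ 3 * (6 * E) := this
    _ = 6 / c ^ 3 * E := by ring

lemma bound_k11 {E u v c : ℝ} (hE : 0 < E) (hc : 0 < c) (hcv : c ≤ v) :
    |E * v * (6 * u ^ 2 - 2 * v ^ 2) / ((u ^ 2 + v ^ 2) ^ 3)| ≤ 6 / c ^ 3 * E := by
  have hv : 0 < v := hc.trans_le hcv
  refine bound_aux3 hE hc hcv ?_
  rw [abs_le]
  constructor <;>
    nlinarith [mul_nonneg (mul_nonneg hE.le hv.le) (sq_nonneg u),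
      mul_nonneg (mul_nonneg hE.le hv.le) (sq_nonneg v)]

lemma bound_k22 {E u v c : ℝ} (hE : 0 < E) (hc : 0 < c) (hcv : c ≤ v) :
    |E * (2 * v ^ 3 - 6 * u ^ 2 * v) / ((u ^ 2 + v ^ 2) ^ 3)| ≤ 6 / c ^ 3 * E := by
  have hv : 0 < v := hc.trans_le hcv
  refine bound_aux3 hE hc hcv ?_
  rw [abs_le]
  constructor <;>
    nlinarith [mul_nonneg (mul_nonneg hE.le hv.le) (sq_nonneg u),
      mul_nonneg (mul_nonneg hE.le hv.le) (sq_nonneg v)]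

lemma HD_den {b v : ℝ} (t : ℝ) :
    HasDerivAt (fun t : ℝ => (t - b) ^ 2 + v ^ 2) (2 * (t - b)) t := by
  simpa using (((hasDerivAt_id t).sub_const b).pow 2).add_const (v ^ 2)

lemma HD1 {A b v : ℝ} (t : ℝ) (hd : (t - b) ^ 2 + v ^ 2 ≠ 0) :
    HasDerivAt (fun t => A / ((t - b) ^ 2 + v ^ 2))
      (A * (-2) * (t - b) / (((t - b) ^ 2 + v ^ 2) ^ 2)) t := by
  have := (hasDerivAt_const t A).fun_div (HD_den t) hd
  refine this.congr_deriv ?_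
  ring

lemma HD2 {A b v : ℝ} (t : ℝ) (hd : (t - b) ^ 2 + v ^ 2 ≠ 0) :
    HasDerivAt (fun t => A * (-2) * (t - b) / (((t - b) ^ 2 + v ^ 2) ^ 2))
      (A * (6 * (t - b) ^ 2 - 2 * v ^ 2) / (((t - b) ^ 2 + v ^ 2) ^ 3)) t := by
  have hn : HasDerivAt (fun t : ℝ => A * (-2) * (t - b)) (A * (-2)) t := by
    simpa using ((hasDerivAt_id t).sub_const b).const_mul (A * (-2))
  have hden : HasDerivAt (fun t : ℝ => ((t - b) ^ 2 + v ^ 2) ^ 2)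
      (2 * ((t - b) ^ 2 + v ^ 2) * (2 * (t - b))) t := by
    simpa using (HD_den t (b := b) (v := v)).fun_pow 2
  have := hn.fun_div hden (pow_ne_zero 2 hd)
  refine this.congr_deriv ?_
  field_simp
  ring

lemma HD3 {E u s c : ℝ} (t : ℝ) (hd : u ^ 2 + (t + s + c) ^ 2 ≠ 0) :
    HasDerivAt (fun t => E * (t + s + c) / (u ^ 2 + (t + s + c) ^ 2))
      (E * (u ^ 2 - (t + s + c) ^ 2) / ((u ^ 2 + (t + s + c) ^ 2) ^ 2)) t := by
  have hw : HasDerivAt (fun t : ℝ => t + s + c) 1 t :=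
    ((hasDerivAt_id t).add_const s).add_const c
  have hn : HasDerivAt (fun t : ℝ => E * (t + s + c)) E t := by simpa using hw.const_mul E
  have hden : HasDerivAt (fun t : ℝ => u ^ 2 + (t + s + c) ^ 2) (2 * (t + s + c)) t := by
    simpa using (hw.pow 2).const_add (u ^ 2)
  have := hn.fun_div hden hd
  refine this.congr_deriv ?_
  field_simp
  ring

lemma HD4 {E u s c : ℝ} (t : ℝ) (hd : u ^ 2 + (t + s + c) ^ 2 ≠ 0) :
    HasDerivAt (fun t => E * (u ^ 2 - (t + s + c) ^ 2) / ((u ^ 2 + (t + s + c) ^ 2) ^ 2))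
      (E * (2 * (t + s + c) ^ 3 - 6 * u ^ 2 * (t + s + c)) /
        ((u ^ 2 + (t + s + c) ^ 2) ^ 3)) t := by
  have hw : HasDerivAt (fun t : ℝ => t + s + c) 1 t :=
    ((hasDerivAt_id t).add_const s).add_const c
  have hw2 : HasDerivAt (fun t : ℝ => (t + s + c) ^ 2) (2 * (t + s + c)) t := by
    simpa using hw.fun_pow 2
  have hn : HasDerivAt (fun t : ℝ => E * (u ^ 2 - (t + s + c) ^ 2))
      (E * (-(2 * (t + s + c)))) t := by
    simpa using (hw2.const_sub (u ^ 2)).const_mul E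
  have hden : HasDerivAt (fun t : ℝ => (u ^ 2 + (t + s + c) ^ 2) ^ 2)
      (2 * (u ^ 2 + (t + s + c) ^ 2) * (2 * (t + s + c))) t := by
    simpa using (hw2.const_add (u ^ 2)).fun_pow 2
  have := hn.fun_div hden (pow_ne_zero 2 hd)
  refine this.congr_deriv ?_
  field_simp
  ring

lemma hasDerivAt_integral_Ioi (a : ℝ) (ha : 0 < a)
    (f f' : ℝ → ℝ → ℝ) (t₀ ε C : ℝ) (hε : 0 < ε)
    (hmeas : ∀ t, AEStronglyMeasurable (f t) (volume.restrict (Set.Ioi 0)))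
    (hmeas' : AEStronglyMeasurable (f' t₀) (volume.restrict (Set.Ioi 0)))
    (hint : IntegrableOn (f t₀) (Set.Ioi 0))
    (hbound : ∀ s ∈ Set.Ioi (0:ℝ), ∀ t ∈ Metric.ball t₀ ε, |f' t s| ≤ C * Real.exp (-a * s))
    (hderiv : ∀ s ∈ Set.Ioi (0:ℝ), ∀ t ∈ Metric.ball t₀ ε,
      HasDerivAt (fun t => f t s) (f' t s) t) :
    IntegrableOn (f' t₀) (Set.Ioi 0) ∧
      HasDerivAt (fun t => ∫ s in Set.Ioi (0:ℝ), f t s) (∫ s in Set.Ioi (0:ℝ), f' t₀ s) t₀ := by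
  have hbint : Integrable (fun s => C * Real.exp (-a * s)) (volume.restrict (Set.Ioi 0)) :=
    (exp_neg_integrableOn_Ioi 0 ha).const_mul C
  exact hasDerivAt_integral_of_dominated_loc_of_deriv_le (Metric.ball_mem_nhds t₀ hε)
    (Filter.Eventually.of_forall hmeas) hint hmeas'
    (ae_restrict_of_forall_mem measurableSet_Ioi hbound)
    hbint
    (ae_restrict_of_forall_mem measurableSet_Ioi hderiv)

set_option maxHeartbeats 1000000 in
lemma dir1 (a : ℝ) (ha : 0 < a) (x1 x2 y1 y2 : ℝ) (hc : 0 < x2 + y2) :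
    IntegrableOn (fun s => Real.exp (-a * s) * (x2 + s + y2) *
        (6 * (x1 - y1) ^ 2 - 2 * (x2 + s + y2) ^ 2) /
        (((x1 - y1) ^ 2 + (x2 + s + y2) ^ 2) ^ 3)) (Set.Ioi 0) ∧
      deriv (deriv (fun t => ∫ s in Set.Ioi (0:ℝ),
          Real.exp (-a * s) * (x2 + s + y2) / ((t - y1) ^ 2 + (x2 + s + y2) ^ 2))) x1
        = ∫ s in Set.Ioi (0:ℝ), Real.exp (-a * s) * (x2 + s + y2) *
            (6 * (x1 - y1) ^ 2 - 2 * (x2 + s + y2) ^ 2) /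
            (((x1 - y1) ^ 2 + (x2 + s + y2) ^ 2) ^ 3) := by
  have hE : ∀ s : ℝ, 0 < Real.exp (-a * s) := fun s => Real.exp_pos _
  have hv : ∀ s ∈ Set.Ioi (0:ℝ), x2 + y2 ≤ x2 + s + y2 := fun s hs => by
    simp only [Set.mem_Ioi] at hs; linarith
  have hvpos : ∀ s ∈ Set.Ioi (0:ℝ), 0 < x2 + s + y2 := fun s hs =>
    lt_of_lt_of_le hc (hv s hs)
  have m0 : ∀ t : ℝ, AEStronglyMeasurable
      (fun s => Real.exp (-a * s) * (x2 + s + y2) / ((t - y1) ^ 2 + (x2 + s + y2) ^ 2))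
      (volume.restrict (Set.Ioi 0)) := fun t =>
    (Measurable.aestronglyMeasurable (by fun_prop))
  have m1 : ∀ t : ℝ, AEStronglyMeasurable
      (fun s => Real.exp (-a * s) * (x2 + s + y2) * (-2) * (t - y1) /
        (((t - y1) ^ 2 + (x2 + s + y2) ^ 2) ^ 2))
      (volume.restrict (Set.Ioi 0)) := fun t =>
    (Measurable.aestronglyMeasurable (by fun_prop))
  have m2 : AEStronglyMeasurable
      (fun s => Real.exp (-a * s) * (x2 + s + y2) *
        (6 * (x1 - y1) ^ 2 - 2 * (x2 + s + y2) ^ 2) /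
        (((x1 - y1) ^ 2 + (x2 + s + y2) ^ 2) ^ 3))
      (volume.restrict (Set.Ioi 0)) :=
    (Measurable.aestronglyMeasurable (by fun_prop))
  have i0 : ∀ t : ℝ, IntegrableOn
      (fun s => Real.exp (-a * s) * (x2 + s + y2) / ((t - y1) ^ 2 + (x2 + s + y2) ^ 2))
      (Set.Ioi 0) := fun t => by
    refine Integrable.mono' ((exp_neg_integrableOn_Ioi 0 ha).const_mul (1 / (x2 + y2)))
      (m0 t) ?_
    refine ae_restrict_of_forall_mem measurableSet_Ioi (fun s hs => ?_)
    rw [Real.norm_eq_abs]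
    exact bound_k (hE s) hc (hv s hs)
  have stepA : ∀ t₀ : ℝ,
      IntegrableOn (fun s => Real.exp (-a * s) * (x2 + s + y2) * (-2) * (t₀ - y1) /
        (((t₀ - y1) ^ 2 + (x2 + s + y2) ^ 2) ^ 2)) (Set.Ioi 0) ∧
      HasDerivAt (fun t => ∫ s in Set.Ioi (0:ℝ),
          Real.exp (-a * s) * (x2 + s + y2) / ((t - y1) ^ 2 + (x2 + s + y2) ^ 2))
        (∫ s in Set.Ioi (0:ℝ), Real.exp (-a * s) * (x2 + s + y2) * (-2) * (t₀ - y1) /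
          (((t₀ - y1) ^ 2 + (x2 + s + y2) ^ 2) ^ 2)) t₀ := fun t₀ =>
    hasDerivAt_integral_Ioi a ha
      (fun t s => Real.exp (-a * s) * (x2 + s + y2) / ((t - y1) ^ 2 + (x2 + s + y2) ^ 2))
      (fun t s => Real.exp (-a * s) * (x2 + s + y2) * (-2) * (t - y1) /
        (((t - y1) ^ 2 + (x2 + s + y2) ^ 2) ^ 2)) t₀ 1 (1 / (x2 + y2) ^ 2) one_pos m0 (m1 t₀) (i0 t₀)
      (fun s hs t _ => bound_k1 (hE s) hc (hv s hs))
      (fun s hs t _ => HD1 t (by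
        have := hvpos s hs
        positivity))
  have stepB :
      IntegrableOn (fun s => Real.exp (-a * s) * (x2 + s + y2) *
        (6 * (x1 - y1) ^ 2 - 2 * (x2 + s + y2) ^ 2) /
        (((x1 - y1) ^ 2 + (x2 + s + y2) ^ 2) ^ 3)) (Set.Ioi 0) ∧
      HasDerivAt (fun t => ∫ s in Set.Ioi (0:ℝ),
          Real.exp (-a * s) * (x2 + s + y2) * (-2) * (t - y1) /
            (((t - y1) ^ 2 + (x2 + s + y2) ^ 2) ^ 2))
        (∫ s in Set.Ioi (0:ℝ), Real.exp (-a * s) * (x2 + s + y2) *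
          (6 * (x1 - y1) ^ 2 - 2 * (x2 + s + y2) ^ 2) /
          (((x1 - y1) ^ 2 + (x2 + s + y2) ^ 2) ^ 3)) x1 :=
    hasDerivAt_integral_Ioi a ha
      (fun t s => Real.exp (-a * s) * (x2 + s + y2) * (-2) * (t - y1) /
        (((t - y1) ^ 2 + (x2 + s + y2) ^ 2) ^ 2))
      (fun t s => Real.exp (-a * s) * (x2 + s + y2) *
        (6 * (t - y1) ^ 2 - 2 * (x2 + s + y2) ^ 2) /
        (((t - y1) ^ 2 + (x2 + s + y2) ^ 2) ^ 3)) x1 1 (6 / (x2 + y2) ^ 3) one_pos m1 m2 (stepA x1).1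
      (fun s hs t _ => bound_k11 (hE s) hc (hv s hs))
      (fun s hs t _ => HD2 t (by
        have := hvpos s hs
        positivity))
  refine ⟨stepB.1, ?_⟩
  have e1 : deriv (fun t => ∫ s in Set.Ioi (0:ℝ),
      Real.exp (-a * s) * (x2 + s + y2) / ((t - y1) ^ 2 + (x2 + s + y2) ^ 2))
      = fun t => ∫ s in Set.Ioi (0:ℝ), Real.exp (-a * s) * (x2 + s + y2) * (-2) * (t - y1) /
          (((t - y1) ^ 2 + (x2 + s + y2) ^ 2) ^ 2) :=
    funext fun t => ((stepA t).2).deriv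
  rw [e1]
  exact stepB.2.deriv

set_option maxHeartbeats 1000000 in
lemma dir2 (a : ℝ) (ha : 0 < a) (x1 x2 y1 y2 : ℝ) (hc : 0 < x2 + y2) :
    IntegrableOn (fun s => Real.exp (-a * s) *
        (2 * (x2 + s + y2) ^ 3 - 6 * (x1 - y1) ^ 2 * (x2 + s + y2)) /
        (((x1 - y1) ^ 2 + (x2 + s + y2) ^ 2) ^ 3)) (Set.Ioi 0) ∧
      deriv (deriv (fun t => ∫ s in Set.Ioi (0:ℝ),
          Real.exp (-a * s) * (t + s + y2) / ((x1 - y1) ^ 2 + (t + s + y2) ^ 2))) x2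
        = ∫ s in Set.Ioi (0:ℝ), Real.exp (-a * s) *
            (2 * (x2 + s + y2) ^ 3 - 6 * (x1 - y1) ^ 2 * (x2 + s + y2)) /
            (((x1 - y1) ^ 2 + (x2 + s + y2) ^ 2) ^ 3) := by
  have hE : ∀ s : ℝ, 0 < Real.exp (-a * s) := fun s => Real.exp_pos _
  have hc2 : 0 < (x2 + y2) / 2 := by linarith
  have hv : ∀ s ∈ Set.Ioi (0:ℝ), ∀ τ ∈ Metric.ball x2 ((x2 + y2) / 4),
      ∀ t ∈ Metric.ball τ ((x2 + y2) / 4), (x2 + y2) / 2 ≤ t + s + y2 := by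
    intro s hs τ hτ t ht
    rw [Metric.mem_ball, Real.dist_eq] at hτ ht
    have h1 := abs_lt.mp hτ
    have h2 := abs_lt.mp ht
    simp only [Set.mem_Ioi] at hs
    linarith
  have m0 : ∀ t : ℝ, AEStronglyMeasurable
      (fun s => Real.exp (-a * s) * (t + s + y2) / ((x1 - y1) ^ 2 + (t + s + y2) ^ 2))
      (volume.restrict (Set.Ioi 0)) := fun t =>
    (Measurable.aestronglyMeasurable (by fun_prop))
  have m1 : ∀ t : ℝ, AEStronglyMeasurable
      (fun s => Real.exp (-a * s) * ((x1 - y1) ^ 2 - (t + s + y2) ^ 2) /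
        (((x1 - y1) ^ 2 + (t + s + y2) ^ 2) ^ 2))
      (volume.restrict (Set.Ioi 0)) := fun t =>
    (Measurable.aestronglyMeasurable (by fun_prop))
  have m2 : AEStronglyMeasurable
      (fun s => Real.exp (-a * s) *
        (2 * (x2 + s + y2) ^ 3 - 6 * (x1 - y1) ^ 2 * (x2 + s + y2)) /
        (((x1 - y1) ^ 2 + (x2 + s + y2) ^ 2) ^ 3))
      (volume.restrict (Set.Ioi 0)) :=
    (Measurable.aestronglyMeasurable (by fun_prop))
  have i0 : ∀ τ ∈ Metric.ball x2 ((x2 + y2) / 4), IntegrableOn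
      (fun s => Real.exp (-a * s) * (τ + s + y2) / ((x1 - y1) ^ 2 + (τ + s + y2) ^ 2))
      (Set.Ioi 0) := fun τ hτ => by
    refine Integrable.mono'
      ((exp_neg_integrableOn_Ioi 0 ha).const_mul (1 / ((x2 + y2) / 2))) (m0 τ) ?_
    refine ae_restrict_of_forall_mem measurableSet_Ioi (fun s hs => ?_)
    rw [Real.norm_eq_abs]
    exact bound_k (hE s) hc2 (hv s hs τ hτ τ (Metric.mem_ball_self (by linarith)))
  have stepA : ∀ τ ∈ Metric.ball x2 ((x2 + y2) / 4),
      IntegrableOn (fun s => Real.exp (-a * s) * ((x1 - y1) ^ 2 - (τ + s + y2) ^ 2) /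
        (((x1 - y1) ^ 2 + (τ + s + y2) ^ 2) ^ 2)) (Set.Ioi 0) ∧
      HasDerivAt (fun t => ∫ s in Set.Ioi (0:ℝ),
          Real.exp (-a * s) * (t + s + y2) / ((x1 - y1) ^ 2 + (t + s + y2) ^ 2))
        (∫ s in Set.Ioi (0:ℝ), Real.exp (-a * s) * ((x1 - y1) ^ 2 - (τ + s + y2) ^ 2) /
          (((x1 - y1) ^ 2 + (τ + s + y2) ^ 2) ^ 2)) τ := fun τ hτ =>
    hasDerivAt_integral_Ioi a ha
      (fun t s => Real.exp (-a * s) * (t + s + y2) / ((x1 - y1) ^ 2 + (t + s + y2) ^ 2))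
      (fun t s => Real.exp (-a * s) * ((x1 - y1) ^ 2 - (t + s + y2) ^ 2) /
        (((x1 - y1) ^ 2 + (t + s + y2) ^ 2) ^ 2)) τ ((x2 + y2) / 4) (1 / ((x2 + y2) / 2) ^ 2)
      (by linarith) m0 (m1 τ) (i0 τ hτ)
      (fun s hs t ht => bound_k2 (hE s) hc2 (hv s hs τ hτ t ht))
      (fun s hs t ht => HD3 t (by
        have h := lt_of_lt_of_le hc2 (hv s hs τ hτ t ht)
        positivity))
  have hx2mem : x2 ∈ Metric.ball x2 ((x2 + y2) / 4) := Metric.mem_ball_self (by linarith)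
  have stepB :
      IntegrableOn (fun s => Real.exp (-a * s) *
        (2 * (x2 + s + y2) ^ 3 - 6 * (x1 - y1) ^ 2 * (x2 + s + y2)) /
        (((x1 - y1) ^ 2 + (x2 + s + y2) ^ 2) ^ 3)) (Set.Ioi 0) ∧
      HasDerivAt (fun t => ∫ s in Set.Ioi (0:ℝ),
          Real.exp (-a * s) * ((x1 - y1) ^ 2 - (t + s + y2) ^ 2) /
            (((x1 - y1) ^ 2 + (t + s + y2) ^ 2) ^ 2))
        (∫ s in Set.Ioi (0:ℝ), Real.exp (-a * s) *
          (2 * (x2 + s + y2) ^ 3 - 6 * (x1 - y1) ^ 2 * (x2 + s + y2)) /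
          (((x1 - y1) ^ 2 + (x2 + s + y2) ^ 2) ^ 3)) x2 :=
    hasDerivAt_integral_Ioi a ha
      (fun t s => Real.exp (-a * s) * ((x1 - y1) ^ 2 - (t + s + y2) ^ 2) /
        (((x1 - y1) ^ 2 + (t + s + y2) ^ 2) ^ 2))
      (fun t s => Real.exp (-a * s) *
        (2 * (t + s + y2) ^ 3 - 6 * (x1 - y1) ^ 2 * (t + s + y2)) /
        (((x1 - y1) ^ 2 + (t + s + y2) ^ 2) ^ 3)) x2 ((x2 + y2) / 4) (6 / ((x2 + y2) / 2) ^ 3)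
      (by linarith) m1 m2 (stepA x2 hx2mem).1
      (fun s hs t ht => bound_k22 (hE s) hc2 (hv s hs x2 hx2mem t ht))
      (fun s hs t ht => HD4 t (by
        have h := lt_of_lt_of_le hc2 (hv s hs x2 hx2mem t ht)
        positivity))
  refine ⟨stepB.1, ?_⟩
  have e2 : deriv (fun t => ∫ s in Set.Ioi (0:ℝ),
      Real.exp (-a * s) * (t + s + y2) / ((x1 - y1) ^ 2 + (t + s + y2) ^ 2))
      =ᶠ[nhds x2] fun t => ∫ s in Set.Ioi (0:ℝ),
        Real.exp (-a * s) * ((x1 - y1) ^ 2 - (t + s + y2) ^ 2) /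
          (((x1 - y1) ^ 2 + (t + s + y2) ^ 2) ^ 2) := by
    filter_upwards [Metric.ball_mem_nhds x2 (by linarith : (0:ℝ) < (x2 + y2) / 4)] with τ hτ
    exact ((stepA τ hτ).2).deriv
  rw [e2.deriv_eq]
  exact stepB.2.deriv

end aux

/-- For `a > 0` and `y` in the upper half-plane (`y* = (y₁,-y₂)`), the function
`x ↦ ∫₀^∞ e^{-as}(x₂+s+y₂)/|x + s e₂ - y*|² ds` is harmonic in the open upper half-plane
(away from `y`). -/
theorem halfplane_green_correction_harmonic (a : ℝ) (ha : 0 < a) (y : ℝ × ℝ) (hy : 0 < y.2)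
    (F : ℝ × ℝ → ℝ)
    (hF : ∀ x : ℝ × ℝ,
      F x = ∫ s in Set.Ioi (0 : ℝ),
        Real.exp (-a * s) * (x.2 + s + y.2) / ((x.1 - y.1) ^ 2 + (x.2 + s + y.2) ^ 2)) :
    ∀ x : ℝ × ℝ, 0 < x.2 → x ≠ y → lap F x = 0 := by
  intro x hx2 _
  have hc : 0 < x.2 + y.2 := by linarith
  have h1 := dir1 a ha x.1 x.2 y.1 y.2 hc
  have h2 := dir2 a ha x.1 x.2 y.1 y.2 hc
  have e1 : (fun t => F (t, x.2)) = fun t => ∫ s in Set.Ioi (0:ℝ),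
      Real.exp (-a * s) * (x.2 + s + y.2) / ((t - y.1) ^ 2 + (x.2 + s + y.2) ^ 2) :=
    funext fun t => hF (t, x.2)
  have e2 : (fun t => F (x.1, t)) = fun t => ∫ s in Set.Ioi (0:ℝ),
      Real.exp (-a * s) * (t + s + y.2) / ((x.1 - y.1) ^ 2 + (t + s + y.2) ^ 2) :=
    funext fun t => hF (x.1, t)
  show deriv (deriv (fun s => F (s, x.2))) x.1 + deriv (deriv (fun s => F (x.1, s))) x.2 = 0
  rw [e1, e2, h1.2, h2.2, ← integral_add h1.1 h2.1]
  refine Eq.trans (integral_congr_ae (Filter.Eventually.of_forall fun s => ?_)) (integral_zero _ _)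
  beta_reduce
  rw [← add_div]
  rw [show Real.exp (-a * s) * (x.2 + s + y.2) *
      (6 * (x.1 - y.1) ^ 2 - 2 * (x.2 + s + y.2) ^ 2) +
      Real.exp (-a * s) *
      (2 * (x.2 + s + y.2) ^ 3 - 6 * (x.1 - y.1) ^ 2 * (x.2 + s + y.2)) = (0:ℝ) by ring,
    zero_div]
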